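/- Let (X,ν) be a probability space, T: X → X measure-preserving, and φ ∈ L¹(X,ν) a function with ∫φ dν = 0. Define the essential image of φ as the set of t ∈ ℝ such that ν(φ⁻¹[t-ε, t+ε]) > 0 for every ε > 0. If the closed subgroup of ℝ generated by the essential image of φ equals αℤ for some α ≠ 0, then the set A = X × (αℤ + [0, α/4]) ⊆ X × ℝ satisfies: A is invariant under the skew product Φ(x,t) = (Tx, t + φ(x)) up to null sets, and both A and its complement have positive (in fact infinite) ν × Lebesgue measure. -/

import Mathlib

open MeasureTheory
open scoped ENNReal

/-- If the closed subgroup generated by the essential image of a zero-mean `φ ∈ L¹(X,ν)`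
equals `αℤ` with `α ≠ 0`, then `A = X × (αℤ + [0,α/4])` is invariant (mod null sets)
under the skew product `Φ(x,t) = (Tx, t+φ(x))` on `X × ℝ`, and both `A` and its
complement have infinite (in particular positive) `ν × Leb` measure. -/
theorem stmt_7 {X : Type*} [MeasurableSpace X] (ν : Measure X) [IsProbabilityMeasure ν]
    (T : X → X) (hT : MeasurePreserving T ν ν)
    (φ : X → ℝ) (hφmeas : Measurable φ) (hφint : Integrable φ ν)
    (hφ0 : ∫ x, φ x ∂ν = 0)
    (α : ℝ) (hα : α ≠ 0)
    (hgen : (AddSubgroup.closure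
        {t : ℝ | ∀ ε : ℝ, 0 < ε → 0 < ν (φ ⁻¹' Set.Icc (t - ε) (t + ε))}).topologicalClosure
      = AddSubgroup.zmultiples α) :
    (ν.prod volume)
        (symmDiff {p : X × ℝ | ∃ m : ℤ, p.2 - α * m ∈ Set.uIcc 0 (α / 4)}
          ((fun p : X × ℝ => (T p.1, p.2 + φ p.1)) ⁻¹'
            {p : X × ℝ | ∃ m : ℤ, p.2 - α * m ∈ Set.uIcc 0 (α / 4)})) = 0 ∧
      (ν.prod volume) {p : X × ℝ | ∃ m : ℤ, p.2 - α * m ∈ Set.uIcc 0 (α / 4)} = ⊤ ∧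
      (ν.prod volume) {p : X × ℝ | ∃ m : ℤ, p.2 - α * m ∈ Set.uIcc 0 (α / 4)}ᶜ = ⊤ := by
  have habs : (0:ℝ) < |α| := abs_pos.mpr hα
  set I : Set ℝ := Set.uIcc 0 (α / 4) with hIdef
  set A : Set (X × ℝ) := {p : X × ℝ | ∃ m : ℤ, p.2 - α * m ∈ I} with hAdef
  -- bound on members of I
  have hIbound : ∀ s ∈ I, |s| ≤ |α| / 4 := by
    intro s hs
    rcases Set.mem_uIcc.mp hs with ⟨h1, h2⟩ | ⟨h1, h2⟩ <;>
      rw [abs_le] <;> constructor <;> nlinarith [le_abs_self α, neg_abs_le α]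
  -- multiples of α are far apart
  have hmult : ∀ k : ℤ, k ≠ 0 → |α| ≤ |α * (k:ℝ)| := by
    intro k hk
    rw [abs_mul]
    have h1 : (1:ℝ) ≤ |(k:ℝ)| := by
      rw [← Int.cast_abs]
      exact_mod_cast Int.one_le_abs hk
    nlinarith
  -- fiber set S and its structure
  set S : Set ℝ := {t : ℝ | ∃ m : ℤ, t - α * m ∈ I} with hSdef
  set J : ℤ → Set ℝ := fun m => (fun t : ℝ => t - α * m) ⁻¹' I with hJdef
  have hSJ : S = ⋃ m : ℤ, J m := by
    ext t; simp [hSdef, hJdef]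
  have hJmeas : ∀ m : ℤ, MeasurableSet (J m) :=
    fun m => measurableSet_uIcc.preimage (measurable_sub_const _)
  have hJvol : ∀ m : ℤ, volume (J m) = ENNReal.ofReal (|α| / 4) := by
    intro m
    have : J m = (fun t : ℝ => -(α * m) + t) ⁻¹' I := by
      ext t; simp [hJdef, sub_eq_neg_add]
    rw [this, measure_preimage_add, hIdef, Real.volume_interval]
    congr 1
    rw [sub_zero, abs_div]
    norm_num
  have hJdisj : Pairwise (Function.onFun Disjoint J) := by
    intro m n hmn
    rw [Function.onFun, Set.disjoint_left]
    intro t hm hn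
    have h1 : |t - α * m| ≤ |α| / 4 := hIbound _ hm
    have h2 : |t - α * n| ≤ |α| / 4 := hIbound _ hn
    have h3 : |α| ≤ |α * (((n - m : ℤ)):ℝ)| := hmult _ (sub_ne_zero.mpr hmn.symm)
    have h4 : α * (((n - m : ℤ)):ℝ) = (t - α * m) - (t - α * n) := by push_cast; ring
    rw [h4] at h3
    have h5 := abs_sub (t - α * m) (t - α * n)
    linarith
  have hSvol : volume S = ⊤ := by
    rw [hSJ, measure_iUnion hJdisj hJmeas]
    simp only [hJvol]
    exact ENNReal.tsum_const_eq_top_of_ne_zero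
      ((ENNReal.ofReal_pos.mpr (by positivity)).ne')
  -- complement has infinite measure too
  set K : ℤ → Set ℝ := fun m => (fun t : ℝ => t - α * m) ⁻¹' Set.Ioo (|α| / 4) (3 * |α| / 4)
    with hKdef
  have hKmeas : ∀ m : ℤ, MeasurableSet (K m) :=
    fun m => measurableSet_Ioo.preimage (measurable_sub_const _)
  have hKvol : ∀ m : ℤ, volume (K m) = ENNReal.ofReal (|α| / 2) := by
    intro m
    have : K m = (fun t : ℝ => -(α * m) + t) ⁻¹' Set.Ioo (|α| / 4) (3 * |α| / 4) := by
      ext t; simp [hKdef, sub_eq_neg_add]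
    rw [this, measure_preimage_add, Real.volume_Ioo]
    congr 1; ring
  have hKdisj : Pairwise (Function.onFun Disjoint K) := by
    intro m n hmn
    rw [Function.onFun, Set.disjoint_left]
    intro t hm hn
    simp only [hKdef, Set.mem_preimage, Set.mem_Ioo] at hm hn
    have h3 : |α| ≤ |α * (((n - m : ℤ)):ℝ)| := hmult _ (sub_ne_zero.mpr hmn.symm)
    have h4 : α * (((n - m : ℤ)):ℝ) = (t - α * m) - (t - α * n) := by push_cast; ring
    rw [h4] at h3
    have h5 : |(t - α * m) - (t - α * n)| < |α| / 2 := by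
      rw [abs_lt]; constructor <;> nlinarith [hm.1, hm.2, hn.1, hn.2]
    linarith
  have hKsub : (⋃ m : ℤ, K m) ⊆ Sᶜ := by
    intro t ht hS
    obtain ⟨m, hm⟩ := Set.mem_iUnion.mp ht
    obtain ⟨k, hk⟩ := hS
    simp only [hKdef, Set.mem_preimage, Set.mem_Ioo] at hm
    have h1 : |t - α * k| ≤ |α| / 4 := hIbound _ hk
    have hkm : k ≠ m := by
      intro h; subst h
      have := abs_le.mp h1
      linarith [this.2]
    have h3 : |α| ≤ |α * (((k - m : ℤ)):ℝ)| := hmult _ (sub_ne_zero.mpr hkm)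
    have h4 : α * (((k - m : ℤ)):ℝ) = (t - α * m) - (t - α * k) := by push_cast; ring
    rw [h4] at h3
    have h5 := abs_sub (t - α * m) (t - α * k)
    have h6 : |t - α * m| < 3 * |α| / 4 := by
      rw [abs_lt]; constructor <;> nlinarith [hm.1, hm.2]
    linarith
  have hScvol : volume Sᶜ = ⊤ := by
    refine top_le_iff.mp ?_
    calc (⊤ : ℝ≥0∞) = volume (⋃ m : ℤ, K m) := by
          rw [measure_iUnion hKdisj hKmeas]
          simp only [hKvol]
          exact (ENNReal.tsum_const_eq_top_of_ne_zero
            ((ENNReal.ofReal_pos.mpr (by positivity)).ne')).symm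
      _ ≤ volume Sᶜ := measure_mono hKsub
  -- A as a product
  have hAprod : A = (Set.univ : Set X) ×ˢ S := by
    ext ⟨x, t⟩; simp [hAdef, hSdef]
  have hAcprod : Aᶜ = (Set.univ : Set X) ×ˢ Sᶜ := by
    ext ⟨x, t⟩; simp [hAdef, hSdef]
  have hAvol : (ν.prod volume) A = ⊤ := by
    rw [hAprod, Measure.prod_prod, measure_univ, one_mul, hSvol]
  have hAcvol : (ν.prod volume) Aᶜ = ⊤ := by
    rw [hAcprod, Measure.prod_prod, measure_univ, one_mul, hScvol]
  refine ⟨?_, hAvol, hAcvol⟩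
  -- invariance mod null
  set E : Set ℝ := {t : ℝ | ∀ ε : ℝ, 0 < ε → 0 < ν (φ ⁻¹' Set.Icc (t - ε) (t + ε))} with hEdef
  have hμEc : (ν.map φ) Eᶜ = 0 := by
    apply measure_null_of_locally_null
    intro t ht
    simp only [hEdef, Set.mem_compl_iff, Set.mem_setOf_eq, not_forall] at ht
    obtain ⟨ε, hε, hν⟩ := ht
    rw [not_lt, nonpos_iff_eq_zero] at hν
    refine ⟨Set.Ioo (t - ε) (t + ε), mem_nhdsWithin_of_mem_nhds
      (Ioo_mem_nhds (by linarith) (by linarith)), ?_⟩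
    have h1 : (ν.map φ) (Set.Ioo (t - ε) (t + ε)) ≤ (ν.map φ) (Set.Icc (t - ε) (t + ε)) :=
      measure_mono Set.Ioo_subset_Icc_self
    rw [Measure.map_apply hφmeas measurableSet_Icc, hν] at h1
    exact le_antisymm h1 (zero_le)
  have hνN : ν (φ ⁻¹' Eᶜ) = 0 :=
    le_antisymm (le_trans (Measure.le_map_apply hφmeas.aemeasurable _) hμEc.le) (zero_le)
  have hEsub : E ⊆ {x : ℝ | ∃ k : ℤ, x = α * k} := by
    intro t ht
    have h1 : t ∈ (AddSubgroup.closure E).topologicalClosure :=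
      AddSubgroup.le_topologicalClosure _ (AddSubgroup.subset_closure ht)
    rw [hgen] at h1
    obtain ⟨k, hk⟩ := AddSubgroup.mem_zmultiples_iff.mp h1
    exact ⟨k, by rw [← hk, zsmul_eq_mul, mul_comm]⟩
  set G : Set X := {x : X | ∃ k : ℤ, φ x = α * k} with hGdef
  have hνGc : ν Gᶜ = 0 := by
    apply measure_mono_null _ hνN
    intro x hx
    simp only [hGdef, Set.mem_compl_iff, Set.mem_setOf_eq, not_exists] at hx
    simp only [Set.mem_preimage, Set.mem_compl_iff]
    intro hE
    obtain ⟨k, hk⟩ := hEsub hE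
    exact hx k hk
  have hsub : symmDiff A ((fun p : X × ℝ => (T p.1, p.2 + φ p.1)) ⁻¹' A) ⊆
      Gᶜ ×ˢ (Set.univ : Set ℝ) := by
    rintro ⟨x, t⟩ hp
    refine ⟨fun hxG => ?_, Set.mem_univ _⟩
    obtain ⟨k, hk⟩ := hxG
    have hiff : (x, t) ∈ A ↔ (x, t) ∈ (fun p : X × ℝ => (T p.1, p.2 + φ p.1)) ⁻¹' A := by
      constructor
      · rintro ⟨m, hm⟩
        refine ⟨m + k, ?_⟩
        simp only
        rw [hk]
        have : t + α * k - α * ((m : ℝ) + (k : ℝ)) = t - α * m := by ring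
        push_cast
        rw [this]
        exact hm
      · rintro ⟨m, hm⟩
        refine ⟨m - k, ?_⟩
        simp only [hk] at hm
        have : t - α * ((m : ℝ) - (k : ℝ)) = t + α * k - α * m := by ring
        push_cast
        rw [this]
        exact hm
    rcases Set.mem_symmDiff.mp hp with ⟨h1, h2⟩ | ⟨h1, h2⟩
    · exact h2 (hiff.mp h1)
    · exact h2 (hiff.mpr h1)
  apply measure_mono_null hsub
  rw [Measure.prod_prod, hνGc, zero_mul]
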